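/- If C is a symmetric positive definite real dX×dX matrix and V := H C Hᵀ is invertible, then the block matrix S(C,H) is symmetric and positive definite; consequently the Gaussian quasi-likelihood based on S(C,H)⁻¹ is well defined. -/

import Mathlib

open Matrix

/-- The block matrix `S(C,H)` of the paper. -/
noncomputable def Smat {dX dY : ℕ} (C : Matrix (Fin dX) (Fin dX) ℝ)
    (H : Matrix (Fin dY) (Fin dX) ℝ) :
    Matrix (Fin dX ⊕ Fin dY) (Fin dX ⊕ Fin dY) ℝ :=
  fromBlocks C (((1:ℝ)/2) • (C * Hᵀ)) (((1:ℝ)/2) • (H * C)) (((1:ℝ)/3) • (H * C * Hᵀ))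

private lemma posSemidef_smul {n : Type*} [Fintype n] {M : Matrix n n ℝ}
    (hM : M.PosSemidef) {c : ℝ} (hc : 0 ≤ c) : (c • M).PosSemidef := by
  refine posSemidef_iff_dotProduct_mulVec.mpr ⟨?_, fun x => ?_⟩
  · unfold Matrix.IsHermitian
    rw [conjTranspose_smul, hM.1]
    simp
  · rw [smul_mulVec, dotProduct_smul]
    exact mul_nonneg hc ((posSemidef_iff_dotProduct_mulVec.mp hM).2 x)

private lemma posDef_of_posSemidef_isUnit {n : Type*} [Fintype n] [DecidableEq n]
    {M : Matrix n n ℝ} (hM : M.PosSemidef) (h : IsUnit M.det) : M.PosDef := by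
  refine posDef_iff_dotProduct_mulVec.mpr ⟨hM.1, fun x hx => ?_⟩
  rcases ((posSemidef_iff_dotProduct_mulVec.mp hM).2 x).lt_or_eq with h' | h'
  · exact h'
  · exfalso
    have hMx : M *ᵥ x = 0 := (hM.dotProduct_mulVec_zero_iff x).mp h'.symm
    have : M *ᵥ x = M *ᵥ 0 := by simp [hMx]
    exact hx ((mulVec_injective_iff_isUnit.mpr ((isUnit_iff_isUnit_det M).mpr h)) this)

/-- If `C` is symmetric positive definite and `V = H C Hᵀ` is invertible, then `S(C,H)`
is symmetric positive definite. -/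
theorem stmt2 {dX dY : ℕ} (C : Matrix (Fin dX) (Fin dX) ℝ)
    (H : Matrix (Fin dY) (Fin dX) ℝ)
    (hC : C.PosDef) (hV : IsUnit (H * C * Hᵀ).det) :
    (Smat C H).PosDef := by
  have hCunit : IsUnit C.det := hC.det_pos.ne'.isUnit
  haveI : Invertible C := C.invertibleOfIsUnitDet hCunit
  set B : Matrix (Fin dX) (Fin dY) ℝ := ((1:ℝ)/2) • (C * Hᵀ) with hB
  set D : Matrix (Fin dY) (Fin dY) ℝ := ((1:ℝ)/3) • (H * C * Hᵀ) with hD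
  have hBH : Bᴴ = ((1:ℝ)/2) • (H * C) := by
    rw [hB, conjTranspose_smul, conjTranspose_mul, conjTranspose_eq_transpose_of_trivial,
      transpose_transpose, show Cᴴ = C from hC.1, star_trivial]
  have hSblocks : Smat C H = fromBlocks C B Bᴴ D := by
    rw [Smat, hBH]
  have key : H * C * C⁻¹ * (C * Hᵀ) = H * C * Hᵀ := by
    rw [Matrix.mul_assoc (H * C) C⁻¹ (C * Hᵀ), ← Matrix.mul_assoc C⁻¹ C Hᵀ,
      C.nonsing_inv_mul hCunit, Matrix.one_mul]
  have hschur : D - Bᴴ * C⁻¹ * B = ((1:ℝ)/12) • (H * C * Hᵀ) := by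
    rw [hBH, hB, hD, Matrix.smul_mul, Matrix.smul_mul, Matrix.mul_smul, key, smul_smul,
      ← sub_smul]
    norm_num
  have hVpsd : (H * C * Hᵀ).PosSemidef := by
    have := hC.posSemidef.mul_mul_conjTranspose_same H
    simpa using this
  have hschurPsd : (D - Bᴴ * C⁻¹ * B).PosSemidef := by
    rw [hschur]
    exact posSemidef_smul hVpsd (by norm_num)
  have hSpsd : (Smat C H).PosSemidef := by
    rw [hSblocks]
    exact (PosDef.fromBlocks₁₁ B D hC).mpr hschurPsd
  have hdet : IsUnit (Smat C H).det := by
    rw [hSblocks, det_fromBlocks₁₁, invOf_eq_nonsing_inv]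
    refine hCunit.mul ?_
    rw [hschur, det_smul]
    refine IsUnit.mul (IsUnit.pow _ ?_) hV
    norm_num
  exact posDef_of_posSemidef_isUnit hSpsd hdet
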